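/- Let P be a protocol that is shadow-permitting and truncatable with truncation constant K, and suppose P implements the predicate φ : ℕ^Σ → {true, false}. Then for every x ∈ ℕ^Σ and every σ ∈ Σ with x(σ) > |Q|·K, it holds that φ(x + e_σ) = φ(x), where e_σ denotes the σ-th unit vector. -/

import Mathlib

open scoped Classical

/-- A configuration: finitely many agents (identified by natural numbers) with states in `Q`,
and finitely many packets (identified by natural numbers) carrying messages in `M`.
`agentState a = none` means `a` is not an agent of the configuration, and similarly
`packetMsg p = none` means `p` is not a packet of the configuration. -/
structure Config (Q : Type) (M : Type) where
  agentState : ℕ → Option Q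
  packetMsg : ℕ → Option M
  finAgents : {a : ℕ | agentState a ≠ none}.Finite
  finPackets : {p : ℕ | packetMsg p ≠ none}.Finite

namespace Config

variable {Q M : Type}

/-- The set `Dom(C_A)` of agents of a configuration. -/
def agentsDom (C : Config Q M) : Set ℕ := {a | C.agentState a ≠ none}

/-- The set `Dom(C_P)` of packets of a configuration. -/
def packetsDom (C : Config Q M) : Set ℕ := {p | C.packetMsg p ≠ none}

/-- Update (add, change or remove) the state of agent `a`. -/
def setAgent (C : Config Q M) (a : ℕ) (s : Option Q) : Config Q M where
  agentState := Function.update C.agentState a s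
  packetMsg := C.packetMsg
  finAgents := by
    apply Set.Finite.subset (C.finAgents.union (Set.finite_singleton a))
    intro x hx
    rcases eq_or_ne x a with h | h
    · exact Or.inr h
    · exact Or.inl (by simpa [Function.update, h] using hx)
  finPackets := C.finPackets

/-- Update (add, change or remove) the content of packet `p`. -/
def setPacket (C : Config Q M) (p : ℕ) (m : Option M) : Config Q M where
  agentState := C.agentState
  packetMsg := Function.update C.packetMsg p m
  finAgents := C.finAgents
  finPackets := by
    apply Set.Finite.subset (C.finPackets.union (Set.finite_singleton p))
    intro x hx
    rcases eq_or_ne x p with h | h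
    · exact Or.inr h
    · exact Or.inl (by simpa [Function.update, h] using hx)

/-- Rename agents and packets by permutations of `ℕ`:
the agent `a` of the result is in the state of agent `πA a` of `C`. -/
def rename (C : Config Q M) (πA πP : Equiv.Perm ℕ) : Config Q M where
  agentState := fun a => C.agentState (πA a)
  packetMsg := fun p => C.packetMsg (πP p)
  finAgents := by
    have h : {a : ℕ | C.agentState (πA a) ≠ none} = πA ⁻¹' C.agentsDom := rfl
    rw [h]
    exact C.finAgents.preimage πA.injective.injOn
  finPackets := by
    have h : {p : ℕ | C.packetMsg (πP p) ≠ none} = πP ⁻¹' C.packetsDom := rfl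
    rw [h]
    exact C.finPackets.preimage πP.injective.injOn

/-- The number of agents of `C` in state `q`. -/
noncomputable def numInState (C : Config Q M) (q : Q) : ℕ :=
  {a | C.agentState a = some q}.ncard

/-- The number of packets of `C` carrying message `m` (the supply of `m` in `C`). -/
noncomputable def supply (C : Config Q M) (m : M) : ℕ :=
  {p | C.packetMsg p = some m}.ncard

end Config

/-- The type of step relations: `Step C A C'` states that there is a step
from `C` to `C'` whose set of active agents is `A`. -/
abbrev StepRel (Q M : Type) := Config Q M → Set ℕ → Config Q M → Prop

/-- The conditions that the step relation of a protocol must satisfy: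
agent conservation, agent and packet anonymity, possibility to ignore extra packets,
and possibility to add passive agents. -/
structure IsProtocolStep {Q M : Type} (Step : StepRel Q M) : Prop where
  active_subset : ∀ {C A C'}, Step C A C' → A ⊆ C.agentsDom
  agent_conservation : ∀ {C A C'}, Step C A C' → C.agentsDom = C'.agentsDom
  anonymity : ∀ (πA πP : Equiv.Perm ℕ) {C A C'}, Step C A C' →
    Step (C.rename πA πP) (πA ⁻¹' A) (C'.rename πA πP)
  ignore_packets : ∀ {C A C'} (p : ℕ) (m : M), Step C A C' →
    C.packetMsg p = none → C'.packetMsg p = none →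
    Step (C.setPacket p (some m)) A (C'.setPacket p (some m))
  add_passive : ∀ {C A C'} (a : ℕ) (q : Q), Step C A C' →
    C.agentState a = none → C'.agentState a = none →
    ∃ q' : Q, Step (C.setAgent a (some q)) A (C'.setAgent a (some q'))

/-- `C → C'` : a step from `C` to `C'` with some set of active agents. -/
def stepTo {Q M : Type} (Step : StepRel Q M) (C C' : Config Q M) : Prop := ∃ A, Step C A C'

/-- Reachability via finitely many steps. -/
def Reaches {Q M : Type} (Step : StepRel Q M) : Config Q M → Config Q M → Prop :=
  Relation.ReflTransGen (stepTo Step)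

/-- An infinite execution: at each moment either nothing changes or a single step occurs. -/
def IsExecution {Q M : Type} (Step : StepRel Q M) (E : ℕ → Config Q M) : Prop :=
  ∀ i, E (i + 1) = E i ∨ stepTo Step (E i) (E (i + 1))

/-- A finite execution of length `n`, given by the first `n + 1` values of `E`. -/
def IsFinExecution {Q M : Type} (Step : StepRel Q M) (n : ℕ) (E : ℕ → Config Q M) : Prop :=
  ∀ i < n, E (i + 1) = E i ∨ stepTo Step (E i) (E (i + 1))

/-- The default fairness condition: every configuration either becomes unreachable from
some moment on, or occurs infinitely many times in the execution. -/
def DefaultFair {Q M : Type} (Step : StepRel Q M) (E : ℕ → Config Q M) : Prop :=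
  ∀ C : Config Q M,
    (∃ n, ∀ m, n ≤ m → ¬ Reaches Step (E m) C) ∨ (∀ n, ∃ m, n ≤ m ∧ E m = C)

/-- A fairness condition is eventual if every finite execution can be continued
to an infinite execution satisfying it. -/
def Eventual {Q M : Type} (Step : StepRel Q M) (Φ : (ℕ → Config Q M) → Prop) : Prop :=
  ∀ (n : ℕ) (E : ℕ → Config Q M), IsFinExecution Step n E →
    ∃ E' : ℕ → Config Q M, (∀ i ≤ n, E' i = E i) ∧ IsExecution Step E' ∧ Φ E'

/-- A fairness condition ensures activity if whenever an execution satisfying it is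
constant from some moment on, no step leads from the final configuration to a
different configuration. -/
def EnsuresActivity {Q M : Type} (Step : StepRel Q M) (Φ : (ℕ → Config Q M) → Prop) : Prop :=
  ∀ E, IsExecution Step E → Φ E → ∀ n, (∀ m, n ≤ m → E m = E n) →
    ∀ C', stepTo Step (E n) C' → C' = E n

/-- A protocol: input mapping, individual output function, step relation
and fairness condition (the finite sets of states `Q`, messages `M` and input
letters `Sg` are type parameters). -/
structure Protocol (Q M Sg : Type) where
  Iin : Sg → Q
  out : Q → Bool
  Step : StepRel Q M
  fair : (ℕ → Config Q M) → Prop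

/-- `C` is a consensus with output value `b`. -/
def IsConsensus {Q M : Type} (out : Q → Bool) (C : Config Q M) (b : Bool) : Prop :=
  ∀ a q, C.agentState a = some q → out q = b

/-- `C` is a stable consensus with output value `b`. -/
def IsStableConsensus {Q M : Type} (Step : StepRel Q M) (out : Q → Bool)
    (C : Config Q M) (b : Bool) : Prop :=
  ∀ D, Reaches Step C D → IsConsensus out D b

/-- `C` is an input configuration for the input `x` : no packets, and for every state `q`
exactly as many agents in `q` as prescribed by `x` and the input mapping. -/
def IsInputConfig {Q M Sg : Type} [Fintype Sg] (Iin : Sg → Q) (x : Sg → ℕ)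
    (C : Config Q M) : Prop :=
  (∀ p, C.packetMsg p = none) ∧
  ∀ q : Q, C.numInState q = ∑ σ : Sg, if Iin σ = q then x σ else 0

/-- The protocol `P` implements the predicate `φ` : every fair execution from an input
configuration for `x` reaches a stable consensus with output value `φ x`. -/
def Implements {Q M Sg : Type} [Fintype Sg] (P : Protocol Q M Sg)
    (φ : (Sg → ℕ) → Bool) : Prop :=
  ∀ (x : Sg → ℕ) (C0 : Config Q M), IsInputConfig P.Iin x C0 →
    ∀ E : ℕ → Config Q M, IsExecution P.Step E → P.fair E → E 0 = C0 →
      ∃ n, IsStableConsensus P.Step P.out (E n) (φ x)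

/-- The unreliable version of a step relation: every step `C --A--> C'` additionally
allows all degraded steps `C --A--> C''` satisfying population preservation,
state preservation, message preservation, and reliance on active agents. -/
def UnrelStep {Q M : Type} (Step : StepRel Q M) : StepRel Q M := fun C A C'' =>
  Step C A C'' ∨ ∃ C', Step C A C' ∧
    C''.agentsDom = C'.agentsDom ∧
    C''.packetMsg = C'.packetMsg ∧
    (∀ a, C''.agentState a = C.agentState a ∨ C''.agentState a = C'.agentState a) ∧
    ((∀ a ∉ A, C''.agentState a = C.agentState a) ∨
      (∀ a ∈ A, C''.agentState a = C'.agentState a))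

/-- The unreliable protocol corresponding to `P`. -/
def Unreliable {Q M Sg : Type} (P : Protocol Q M Sg) : Protocol Q M Sg :=
  { P with Step := UnrelStep P.Step }

/-- A shadow extension of the execution `E` around the agent `a`, using the fresh
agent `a'` : a set of executions starting from `E 0` with the extra agent `a'` added in
the state of `a`, such that removing `a'` from any of them yields `E`, and at every
moment some execution of the set has `a` and `a'` in the same state. -/
def IsShadowExtension {Q M : Type} (Step : StepRel Q M) (E : ℕ → Config Q M)
    (a a' : ℕ) (Ext : Set (ℕ → Config Q M)) : Prop :=
  a ∈ (E 0).agentsDom ∧ a' ∉ (E 0).agentsDom ∧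
  (∀ E' ∈ Ext, IsExecution Step E' ∧ (E' 0).agentState a' = (E 0).agentState a ∧
    ∀ k, (E' k).setAgent a' none = E k) ∧
  ∀ k, ∃ E' ∈ Ext, (E' k).agentState a' = (E' k).agentState a

/-- A protocol is shadow-permitting if from every configuration there is a fair
execution having a shadow extension around every agent. -/
def ShadowPermitting {Q M Sg : Type} (P : Protocol Q M Sg) : Prop :=
  ∀ C : Config Q M, ∃ E, IsExecution P.Step E ∧ E 0 = C ∧ P.fair E ∧
    ∀ a ∈ C.agentsDom, ∃ a' ∉ C.agentsDom,
      ∃ Ext, IsShadowExtension P.Step E a a' Ext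

/-- Truncatability with constant `K` : adding a fresh agent in a state already
represented by at least `K` agents of a stable consensus yields a stable consensus. -/
def TruncatableWith {Q M : Type} (Step : StepRel Q M) (out : Q → Bool) (K : ℕ) : Prop :=
  ∀ (C : Config Q M) (b : Bool) (q : Q), IsStableConsensus Step out C b →
    K ≤ C.numInState q → ∀ a', C.agentState a' = none →
      IsStableConsensus Step out (C.setAgent a' (some q)) b

/-- The cube with lower bounds `l` and (possibly infinite) upper bounds `u`. -/
def cube {Sg : Type} (l : Sg → ℕ) (u : Sg → ℕ∞) : Set (Sg → ℕ) :=
  {x | ∀ σ, l σ ≤ x σ ∧ (x σ : ℕ∞) ≤ u σ}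

/-- A counting set is a finite union of cubes. -/
def IsCountingSet {Sg : Type} (S : Set (Sg → ℕ)) : Prop :=
  ∃ (n : ℕ) (l : Fin n → Sg → ℕ) (u : Fin n → Sg → ℕ∞), S = ⋃ j, cube (l j) (u j)

/-- A counting predicate is the membership predicate of a counting set. -/
def IsCountingPred {Sg : Type} (φ : (Sg → ℕ) → Bool) : Prop :=
  IsCountingSet {x | φ x = true}

section Aux

variable {Q M : Type}

lemma Config.ext' {C D : Config Q M} (h1 : C.agentState = D.agentState)
    (h2 : C.packetMsg = D.packetMsg) : C = D := by
  cases C; cases D; simp_all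

lemma reaches_of_exec {Step : StepRel Q M} {E : ℕ → Config Q M} (hE : IsExecution Step E)
    {i j : ℕ} (h : i ≤ j) : Reaches Step (E i) (E j) := by
  induction j, h using Nat.le_induction with
  | base => exact Relation.ReflTransGen.refl
  | succ j hij ih =>
    rcases hE j with h' | h'
    · rwa [h']
    · exact ih.tail h'

lemma agentsDom_exec {Step : StepRel Q M} (hP : IsProtocolStep Step)
    {E : ℕ → Config Q M} (hE : IsExecution Step E) (k : ℕ) :
    (E k).agentsDom = (E 0).agentsDom := by
  induction k with
  | zero => rfl
  | succ k ih =>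
    rcases hE k with h | ⟨A, h⟩
    · rw [h, ih]
    · rw [← hP.agent_conservation h, ih]

lemma eq_setAgent_of {D C : Config Q M} {a' : ℕ} {q : Q}
    (h1 : D.setAgent a' none = C) (h2 : D.agentState a' = some q) :
    D = C.setAgent a' (some q) := by
  apply Config.ext'
  · funext b
    rcases eq_or_ne b a' with rfl | hb
    · simp only [Config.setAgent, Function.update_self, h2]
    · simp only [Config.setAgent, Function.update_of_ne hb, ← h1]
  · rw [← h1]; rfl

lemma finite_state_set (C : Config Q M) (q : Q) :
    {b : ℕ | C.agentState b = some q}.Finite := by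
  apply C.finAgents.subset
  intro b hb
  simp only [Set.mem_setOf_eq] at hb ⊢
  rw [hb]; exact Option.some_ne_none q

lemma numInState_setAgent [DecidableEq Q] {C : Config Q M} {a' : ℕ}
    (ha : C.agentState a' = none) (q' q : Q) :
    (C.setAgent a' (some q')).numInState q
      = C.numInState q + (if q' = q then 1 else 0) := by
  have hfin := finite_state_set C q
  have hset : {b : ℕ | (C.setAgent a' (some q')).agentState b = some q}
      = if q' = q then insert a' {b | C.agentState b = some q}
        else {b | C.agentState b = some q} := by
    ext b
    rcases eq_or_ne b a' with rfl | hb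
    · simp only [Config.setAgent, Set.mem_setOf_eq, Function.update_self]
      by_cases hq : q' = q <;> simp [hq, ha]
    · simp only [Config.setAgent, Set.mem_setOf_eq, Function.update_of_ne hb]
      by_cases hq : q' = q <;> simp [hq, hb]
  show {b : ℕ | (C.setAgent a' (some q')).agentState b = some q}.ncard = _
  rw [hset]
  by_cases hq : q' = q
  · simp only [hq, if_true]
    rw [Set.ncard_insert_of_notMem (by simp [Set.mem_setOf_eq, ha]) hfin]
    rfl
  · simp [hq]; rfl

lemma ncard_get_count {Q : Type} [DecidableEq Q] (l : List Q) (q : Q) :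
    {a : ℕ | l[a]? = some q}.ncard = l.count q := by
  induction l with
  | nil => simp [Set.ncard_eq_zero]
  | cons x l ih =>
    have hfin : {a : ℕ | l[a]? = some q}.Finite := by
      apply (Set.finite_Iio l.length).subset
      intro a ha
      simp only [Set.mem_setOf_eq] at ha
      by_contra h
      rw [List.getElem?_eq_none (not_lt.mp h)] at ha
      exact absurd ha (by simp)
    have hset : {a : ℕ | (x :: l)[a]? = some q}
        = (if x = q then insert 0 (Nat.succ '' {a | l[a]? = some q})
            else Nat.succ '' {a | l[a]? = some q}) := by
      ext a
      cases a with
      | zero =>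
        by_cases hq : x = q
        · simp [hq]
        · simp [hq, Ne.symm hq]
      | succ n =>
        by_cases hq : x = q <;>
          simp [List.getElem?_cons_succ, hq, Nat.succ_injective.eq_iff, eq_comm]
    have himg : (Nat.succ '' {a | l[a]? = some q}).ncard
        = {a : ℕ | l[a]? = some q}.ncard :=
      Set.ncard_image_of_injective _ Nat.succ_injective
    rw [hset, List.count_cons]
    by_cases hq : x = q
    · simp only [hq, if_true]
      rw [Set.ncard_insert_of_notMem (by simp) (hfin.image _), himg, ih]
      simp [beq_iff_eq]
    · simp only [hq, if_false]
      rw [himg, ih]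
      simp [beq_iff_eq, Ne.symm hq, fun h => hq h]

lemma exists_input_config {Q M Sg : Type} [Fintype Sg] (Iin : Sg → Q) (x : Sg → ℕ) :
    ∃ C0 : Config Q M, IsInputConfig Iin x C0 := by
  classical
  set l : List Q := Finset.univ.toList.flatMap (fun σ : Sg => List.replicate (x σ) (Iin σ))
    with hl
  have hfin : ∀ q : Q, {a : ℕ | l[a]? = some q}.Finite := by
    intro q
    apply (Set.finite_Iio l.length).subset
    intro a ha
    simp only [Set.mem_setOf_eq] at ha
    by_contra h
    rw [List.getElem?_eq_none (not_lt.mp h)] at ha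
    exact absurd ha (by simp)
  refine ⟨⟨fun a => l[a]?, fun _ => none, ?_, by simp⟩, fun p => rfl, ?_⟩
  · apply (Set.finite_Iio l.length).subset
    intro a ha
    simp only [Set.mem_setOf_eq] at ha
    by_contra h
    exact ha (List.getElem?_eq_none (not_lt.mp h))
  · intro q
    show {a : ℕ | l[a]? = some q}.ncard = _
    rw [ncard_get_count l q, hl]
    have hcount : ∀ L : List Sg,
        (L.flatMap (fun σ : Sg => List.replicate (x σ) (Iin σ))).count q
          = (L.map fun σ => if Iin σ = q then x σ else 0).sum := by
      intro L
      induction L with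
      | nil => simp
      | cons s L ih =>
        simp only [List.flatMap_cons, List.count_append, ih, List.map_cons, List.sum_cons]
        congr 1
        rw [List.count_replicate]
        simp only [beq_iff_eq]
    rw [hcount, Finset.sum_map_toList]

end Aux

/-- If a shadow-permitting protocol, truncatable with constant `K`, implements `φ`,
then incrementing an input coordinate that is already larger than `|Q| ⬝ K`
does not change the value of `φ`. -/
theorem shadow_truncatable_threshold {Q M Sg : Type} [Fintype Q] [Nonempty Q] [Fintype M]
    [Fintype Sg] [Nonempty Sg] (P : Protocol Q M Sg) (hP : IsProtocolStep P.Step)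
    (hEv : Eventual P.Step P.fair) (hAct : EnsuresActivity P.Step P.fair)
    (hshadow : ShadowPermitting P) (K : ℕ) (htrunc : TruncatableWith P.Step P.out K)
    (φ : (Sg → ℕ) → Bool) (himpl : Implements P φ) :
    ∀ (x : Sg → ℕ) (σ : Sg), Fintype.card Q * K < x σ →
      φ (Function.update x σ (x σ + 1)) = φ x := by
  classical
  intro x σ hx
  set x' := Function.update x σ (x σ + 1) with hx'def
  obtain ⟨C0, hC0pack, hC0num⟩ := exists_input_config (M := M) P.Iin x
  obtain ⟨E, hEexec, hE0, hEfair, hshad⟩ := hshadow C0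
  obtain ⟨n, hstab⟩ := himpl x C0 ⟨hC0pack, hC0num⟩ E hEexec hEfair hE0
  have hdom : ∀ k, (E k).agentsDom = C0.agentsDom := by
    intro k; rw [agentsDom_exec hP hEexec k, hE0]
  -- the set of agents initially in state `Iin σ`
  have hfin0 : {b : ℕ | C0.agentState b = some (P.Iin σ)}.Finite :=
    finite_state_set C0 (P.Iin σ)
  set s : Finset ℕ := hfin0.toFinset with hs
  have hscard : Fintype.card Q * K < s.card := by
    have h1 : s.card = C0.numInState (P.Iin σ) := by
      rw [hs]; exact (Set.ncard_eq_toFinset_card _ hfin0).symm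
    have h2 : x σ ≤ C0.numInState (P.Iin σ) := by
      rw [hC0num (P.Iin σ)]
      refine Finset.single_le_sum (f := fun σ' => if P.Iin σ' = P.Iin σ then x σ' else 0)
        (fun _ _ => by positivity) (Finset.mem_univ σ) |>.trans_eq' ?_
      simp
    omega
  -- the state of each agent at time n
  set f : ℕ → Q := fun b => ((E n).agentState b).getD (Classical.arbitrary Q) with hf
  have hfsome : ∀ b ∈ s, (E n).agentState b = some (f b) := by
    intro b hb
    rw [hs, Set.Finite.mem_toFinset, Set.mem_setOf_eq] at hb
    have hbdom : b ∈ (E n).agentsDom := by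
      rw [hdom n]
      simp only [Config.agentsDom, Set.mem_setOf_eq, hb]
      exact Option.some_ne_none _
    simp only [Config.agentsDom, Set.mem_setOf_eq] at hbdom
    cases h : (E n).agentState b with
    | none => exact absurd h hbdom
    | some r => simp [hf, h]
  obtain ⟨q, -, hq⟩ := Finset.exists_lt_card_fiber_of_mul_lt_card_of_maps_to
    (t := (Finset.univ : Finset Q)) (f := f) (fun b _ => Finset.mem_univ (f b))
    (by simpa using hscard)
  obtain ⟨a, ha⟩ := Finset.card_pos.mp (lt_of_le_of_lt (Nat.zero_le K) hq)
  rw [Finset.mem_filter] at ha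
  have haC0 : C0.agentState a = some (P.Iin σ) := by
    have := ha.1; rw [hs, Set.Finite.mem_toFinset, Set.mem_setOf_eq] at this; exact this
  have haq : (E n).agentState a = some q := by rw [hfsome a ha.1, ha.2]
  have hKnum : K ≤ (E n).numInState q := by
    have hsub : (↑((s.filter fun b => f b = q)) : Set ℕ)
        ⊆ {b : ℕ | (E n).agentState b = some q} := by
      intro b hb
      simp only [Finset.coe_filter, Set.mem_setOf_eq] at hb
      rw [Set.mem_setOf_eq, hfsome b hb.1, hb.2]
    have := Set.ncard_le_ncard hsub (finite_state_set (E n) q)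
    rw [Set.ncard_coe_finset] at this
    exact le_trans (le_of_lt hq) this
  -- shadow extension around a
  have haDom : a ∈ C0.agentsDom := by
    simp only [Config.agentsDom, Set.mem_setOf_eq, haC0]
    exact Option.some_ne_none _
  obtain ⟨a', ha'Dom, Ext, hSE⟩ := hshad a haDom
  obtain ⟨-, -, hall, hsame⟩ := hSE
  have ha'0 : C0.agentState a' = none := by
    by_contra h
    exact ha'Dom h
  have hne : a ≠ a' := fun h => ha'Dom (h ▸ haDom)
  obtain ⟨E', hE'mem, hE'same⟩ := hsame n
  obtain ⟨hE'exec, hE'init, hE'proj⟩ := hall E' hE'mem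
  -- E' 0 is the input configuration of x'
  have hE'0 : E' 0 = C0.setAgent a' (some (P.Iin σ)) := by
    apply eq_setAgent_of
    · rw [hE'proj 0, hE0]
    · rw [hE'init, hE0, haC0]
  have hE'astate : (E' n).agentState a = some q := by
    have h1 : ((E' n).setAgent a' none).agentState a = (E' n).agentState a :=
      Function.update_of_ne hne _ _
    rw [hE'proj n] at h1
    rw [← h1, haq]
  have hE'n : E' n = (E n).setAgent a' (some q) := by
    apply eq_setAgent_of (hE'proj n)
    rw [hE'same, hE'astate]
  have hEna' : (E n).agentState a' = none := by
    have : a' ∉ (E n).agentsDom := by rw [hdom n]; exact ha'Dom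
    by_contra h
    exact this h
  have hstab' : IsStableConsensus P.Step P.out (E' n) (φ x) := by
    rw [hE'n]
    exact htrunc (E n) (φ x) q hstab hKnum a' hEna'
  have hE'input : IsInputConfig P.Iin x' (E' 0) := by
    rw [hE'0]
    refine ⟨fun p => hC0pack p, fun r => ?_⟩
    rw [numInState_setAgent ha'0, hC0num r]
    have hpt : ∀ σ' : Sg, (if P.Iin σ' = r then x' σ' else 0)
        = (if P.Iin σ' = r then x σ' else 0)
          + (if σ' = σ then (if P.Iin σ = r then 1 else 0) else 0) := by
      intro σ'
      rcases eq_or_ne σ' σ with rfl | h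
      · simp only [hx'def, Function.update_self, if_pos rfl]
        split_ifs <;> omega
      · simp only [hx'def, Function.update_of_ne h, if_neg h, add_zero]
    rw [Finset.sum_congr rfl (fun σ' _ => hpt σ'), Finset.sum_add_distrib]
    congr 1
    rw [Finset.sum_ite_eq' Finset.univ σ
      (fun _ => if P.Iin σ = r then 1 else 0), if_pos (Finset.mem_univ σ)]
  obtain ⟨E'', hagree, hE''exec, hE''fair⟩ := hEv n E' (fun i _ => hE'exec i)
  have hE''0 : E'' 0 = E' 0 := hagree 0 (Nat.zero_le n)
  have hE''n : E'' n = E' n := hagree n le_rfl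
  obtain ⟨m, hstabm⟩ := himpl x' (E' 0) hE'input E'' hE''exec hE''fair hE''0
  have hstabn : IsStableConsensus P.Step P.out (E'' n) (φ x) := hE''n ▸ hstab'
  rcases le_total m n with h | h
  · have hcons1 : IsConsensus P.out (E'' n) (φ x') :=
      hstabm _ (reaches_of_exec hE''exec h)
    have hcons2 : IsConsensus P.out (E'' n) (φ x) :=
      hstabn _ Relation.ReflTransGen.refl
    have hag : (E'' n).agentState a = some q := by rw [hE''n, hE'astate]
    rw [← hcons1 a q hag, ← hcons2 a q hag]
  · have hcons1 : IsConsensus P.out (E'' m) (φ x) :=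
      hstabn _ (reaches_of_exec hE''exec h)
    have hcons2 : IsConsensus P.out (E'' m) (φ x') :=
      hstabm _ Relation.ReflTransGen.refl
    have hadom : a ∈ (E'' m).agentsDom := by
      rw [agentsDom_exec hP hE''exec m, hE''0, hE'0]
      simp only [Config.agentsDom, Config.setAgent, Set.mem_setOf_eq,
        Function.update_of_ne hne, haC0]
      exact Option.some_ne_none _
    simp only [Config.agentsDom, Set.mem_setOf_eq] at hadom
    cases hqa : (E'' m).agentState a with
    | none => exact absurd hqa hadom
    | some qa => rw [← hcons2 a qa hqa, ← hcons1 a qa hqa]
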